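/- Let S, T be trees. For every e = (s,t) ∈ S ⊗ T there exists a minimum tuple e^λ ∈ (S×T)⁺ with e^λ ≤ e, and it satisfies e^λ = s^λ × t^λ, where s^λ and t^λ are the minimal tuples below s in S and below t in T, respectively (consisting of the leaves that are descendants). -/
import Mathlib


universe u

namespace BroadPaper

/-- A broad relation on `X`: a relation between finite unordered tuples
(multisets) over `X` and elements of `X`. -/
abbrev Rel (X : Type u) : Type u := Multiset X → X → Prop

variable {X : Type u} {Y : Type u} {A : Type u} {B : Type u} {Z : Type u}

/-- Broad transitivity: if `f₁ ⋯ fₙ ≤ e` and `g̲ᵢ ≤ fᵢ` then `g̲₁ ⋯ g̲ₙ ≤ e`,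
encoded via a multiset of pairs `(g̲ᵢ, fᵢ)`. -/
def BTrans (r : Rel X) : Prop :=
  ∀ (p : Multiset (Multiset X × X)) (e : X),
    r (p.map Prod.snd) e → (∀ q ∈ p, r q.1 q.2) → r ((p.map Prod.fst).sum) e

/-- A pre-broad poset: reflexivity plus broad transitivity. -/
def IsPreBroad (r : Rel X) : Prop := (∀ e : X, r {e} e) ∧ BTrans r

/-- A (commutative) broad poset: a pre-broad poset satisfying antisymmetry. -/
def IsBroad (r : Rel X) : Prop :=
  IsPreBroad r ∧ ∀ e f : X, r {e} f → r {f} e → e = f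

/-- Simplicity: letters in any broad relation are pairwise distinct. -/
def Simple (r : Rel X) : Prop := ∀ fs e, r fs e → fs.Nodup

/-- The descendant relation `f ≤_d e`. -/
def descends (r : Rel X) (f e : X) : Prop := ∃ fs, r fs e ∧ f ∈ fs

def Comparable (r : Rel X) (f g : X) : Prop := descends r f g ∨ descends r g f

def Incomp (r : Rel X) (f g : X) : Prop := ¬ descends r f g ∧ ¬ descends r g f

/-- Blockwise extension of a broad relation to a relation between tuples:
`fs ≤ es` iff `fs = f̲₁ ⋯ f̲ₖ`, `es = e₁ ⋯ eₖ` with `f̲ᵢ ≤ eᵢ`. -/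
def tupleLE (r : Rel X) (fs es : Multiset X) : Prop :=
  ∃ p : Multiset (Multiset X × X),
    p.map Prod.snd = es ∧ (p.map Prod.fst).sum = fs ∧ ∀ q ∈ p, r q.1 q.2

/-- A leaf: no tuple strictly below `e`. -/
def IsLeaf (r : Rel X) (e : X) : Prop := ¬ ∃ fs, r fs e ∧ fs ≠ ({e} : Multiset X)

/-- `fs` is the maximum tuple strictly below `e` (written `e^↑`).
If `fs ≠ 0`, `e` is a node; if `fs = 0`, `e` is a stump. -/
def upTuple (r : Rel X) (e : X) (fs : Multiset X) : Prop :=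
  (r fs e ∧ fs ≠ ({e} : Multiset X)) ∧
    ∀ gs, r gs e → gs ≠ ({e} : Multiset X) → tupleLE r gs fs

def IsStump (r : Rel X) (e : X) : Prop := upTuple r e 0

/-- A dendroidally ordered set (tree): a finite simple broad poset in which
every element is a leaf, node or stump, with a `≤_d`-maximum (root). -/
def IsTree (r : Rel X) : Prop :=
  IsBroad r ∧ Finite X ∧ Simple r ∧
    (∀ e : X, IsLeaf r e ∨ ∃ fs, upTuple r e fs) ∧
    ∃ rt : X, ∀ e, descends r e rt

def IsMaxEl (r : Rel X) (e : X) : Prop := ∀ s, descends r e s → s = e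

/-- A forestially ordered set (forest): each element has a unique
`≤_d`-maximal element above it. -/
def IsForest (r : Rel X) : Prop :=
  IsBroad r ∧ Finite X ∧ Simple r ∧
    (∀ e : X, IsLeaf r e ∨ ∃ fs, upTuple r e fs) ∧
    ∀ e : X, ∃! rt : X, IsMaxEl r rt ∧ descends r e rt

/-- A map of broad posets: preserves broad relations (letterwise on tuples). -/
def BroadHom (r : Rel X) (r' : Rel Y) (φ : X → Y) : Prop :=
  ∀ fs e, r fs e → r' (fs.map φ) (φ e)

/-- `rs` is the root tuple: the tuple of `≤_d`-maximal elements (no repeats). -/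
def IsRootTuple (r : Rel X) (rs : Multiset X) : Prop :=
  rs.Nodup ∧ ∀ x, x ∈ rs ↔ IsMaxEl r x

/-- Independent map of forests: `φ(r̲_F)·e̲ ≤ r̲_{F'}` for some tuple `e̲`. -/
def Independent (r : Rel X) (r' : Rel Y) (φ : X → Y) : Prop :=
  ∃ (rs : Multiset X) (rs' : Multiset Y) (es : Multiset Y),
    IsRootTuple r rs ∧ IsRootTuple r' rs' ∧ tupleLE r' (rs.map φ + es) rs'

/-- The (pre-)broad relation generated by a set of generating relations:
closure under reflexivity and broad transitivity. -/
inductive GenRel (gen : Rel X) : Rel X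
  | of : ∀ fs e, gen fs e → GenRel gen fs e
  | refl : ∀ e, GenRel gen {e} e
  | btrans : ∀ (p : Multiset (Multiset X × X)) (e : X),
      GenRel gen (p.map Prod.snd) e → (∀ q ∈ p, GenRel gen q.1 q.2) →
      GenRel gen ((p.map Prod.fst).sum) e

/-- Generators of the tensor product `S ⊗ T`: relations `s̲ × t ≤ (s,t)` and
`s × t̲ ≤ (s,t)`. -/
def tensorGen (rS : Rel A) (rT : Rel B) : Rel (A × B) := fun xs x =>
  (∃ as, rS as x.1 ∧ xs = as.map fun a => (a, x.2)) ∨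
  (∃ bs, rT bs x.2 ∧ xs = bs.map fun b => (x.1, b))

/-- The tensor product broad relation on `A × B`. -/
def tensorRel (rS : Rel A) (rT : Rel B) : Rel (A × B) := GenRel (tensorGen rS rT)

/-- Product of tuples: all pairs from `as` and `bs`. -/
def mprod (as : Multiset A) (bs : Multiset B) : Multiset (A × B) :=
  as.bind fun a => bs.map fun b => (a, b)

end BroadPaper

namespace BroadPaper

section Aux

variable {X : Type u}

/-- Splitting a multiset along a map equation. -/
lemma mem_msum {α : Type u} {x : α} {S : Multiset (Multiset α)} :
    x ∈ S.sum ↔ ∃ s ∈ S, x ∈ s := by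
  induction S using Multiset.induction with
  | empty => simp
  | cons a S ih => simp [Multiset.sum_cons, ih]

lemma map_msum {α β : Type u} (f : α → β) (S : Multiset (Multiset α)) :
    S.sum.map f = (S.map (Multiset.map f)).sum := by
  induction S using Multiset.induction with
  | empty => simp
  | cons a S ih => simp [Multiset.sum_cons, ih]

lemma msum_msum {α : Type u} (T : Multiset (Multiset (Multiset α))) :
    T.sum.sum = (T.map Multiset.sum).sum := by
  induction T using Multiset.induction with
  | empty => simp
  | cons a T ih => simp [Multiset.sum_cons, ih]

/-! ### tupleLE basics -/

lemma tupleLE_single {r : Rel X} {as : Multiset X} {a : X} (h : r as a) :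
    tupleLE r as {a} :=
  ⟨{(as, a)}, by simp, by simp, by simp [h]⟩

lemma tupleLE_add {r : Rel X} {a1 a2 b1 b2 : Multiset X}
    (h1 : tupleLE r a1 b1) (h2 : tupleLE r a2 b2) : tupleLE r (a1 + a2) (b1 + b2) := by
  obtain ⟨p1, hs1, hf1, hr1⟩ := h1
  obtain ⟨p2, hs2, hf2, hr2⟩ := h2
  refine ⟨p1 + p2, by simp [hs1, hs2], by simp [hf1, hf2], ?_⟩
  intro q hq
  rcases Multiset.mem_add.mp hq with h | h
  · exact hr1 q h
  · exact hr2 q h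

lemma tupleLE_bigadd {r : Rel X} (p : Multiset (Multiset X × Multiset X))
    (h : ∀ q ∈ p, tupleLE r q.1 q.2) :
    tupleLE r (p.map Prod.fst).sum (p.map Prod.snd).sum := by
  induction p using Multiset.induction with
  | empty => exact ⟨0, by simp, by simp, by simp⟩
  | cons q p ih =>
    simp only [Multiset.map_cons, Multiset.sum_cons]
    exact tupleLE_add (h q (Multiset.mem_cons_self q p))
      (ih fun q' hq' => h q' (Multiset.mem_cons_of_mem hq'))

end Aux

section Tree

variable {X : Type u} {r : Rel X}

lemma rel_self_mem (hbt : BTrans r) (hrefl : ∀ e : X, r {e} e) (hsimp : Simple r)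
    {fs : Multiset X} {e : X} (hfs : r fs e) (he : e ∈ fs) : fs = {e} := by
  classical
  set p : Multiset (Multiset X × X) :=
    (fs, e) ::ₘ (fs.erase e).map (fun x => ({x}, x)) with hpdef
  have hsnd : p.map Prod.snd = fs := by
    simp only [hpdef, Multiset.map_cons, Multiset.map_map]
    simp [Multiset.cons_erase he]
  have hblocks : ∀ q ∈ p, r q.1 q.2 := by
    intro q hq
    rcases Multiset.mem_cons.mp hq with h | h
    · rw [h]; exact hfs
    · obtain ⟨x, -, rfl⟩ := Multiset.mem_map.mp h; exact hrefl x
  have hres := hbt p e (by rw [hsnd]; exact hfs) hblocks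
  have hfst : (p.map Prod.fst).sum = fs + fs.erase e := by
    simp only [hpdef, Multiset.map_cons, Multiset.map_map]
    simp [Multiset.sum_cons, Function.comp, Multiset.sum_map_singleton]
  rw [hfst] at hres
  have hnd := hsimp _ _ hres
  have herase : fs.erase e = 0 := by
    by_contra h0
    obtain ⟨y, hy⟩ := Multiset.exists_mem_of_ne_zero h0
    have hy2 : y ∈ fs := Multiset.mem_of_mem_erase hy
    have hcnt : 2 ≤ Multiset.count y (fs + fs.erase e) := by
      rw [Multiset.count_add]
      have h1 : 1 ≤ Multiset.count y fs := Multiset.one_le_count_iff_mem.mpr hy2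
      have h2 : 1 ≤ Multiset.count y (fs.erase e) := Multiset.one_le_count_iff_mem.mpr hy
      omega
    have := Multiset.nodup_iff_count_le_one.mp hnd y
    omega
  have hc := Multiset.cons_erase he
  rw [herase] at hc
  exact hc.symm

lemma descends_trans (hbt : BTrans r) (hrefl : ∀ e : X, r {e} e)
    {f g h : X} (h1 : descends r f g) (h2 : descends r g h) : descends r f h := by
  classical
  obtain ⟨fs, hfs, hf⟩ := h1
  obtain ⟨gs, hgs, hg⟩ := h2
  set p : Multiset (Multiset X × X) :=
    (fs, g) ::ₘ (gs.erase g).map (fun x => ({x}, x)) with hpdef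
  have hsnd : p.map Prod.snd = gs := by
    simp only [hpdef, Multiset.map_cons, Multiset.map_map]
    simp [Multiset.cons_erase hg]
  have hblocks : ∀ q ∈ p, r q.1 q.2 := by
    intro q hq
    rcases Multiset.mem_cons.mp hq with hh | hh
    · rw [hh]; exact hfs
    · obtain ⟨x, -, rfl⟩ := Multiset.mem_map.mp hh; exact hrefl x
  have hres := hbt p h (by rw [hsnd]; exact hgs) hblocks
  refine ⟨(p.map Prod.fst).sum, hres, ?_⟩
  have hfst : (p.map Prod.fst).sum = fs + gs.erase g := by
    simp only [hpdef, Multiset.map_cons, Multiset.map_map]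
    simp [Multiset.sum_cons, Function.comp, Multiset.sum_map_singleton]
  rw [hfst]
  exact Multiset.mem_add.mpr (Or.inl hf)

lemma descends_antisymm (h : IsTree r) {f g : X}
    (h1 : descends r f g) (h2 : descends r g f) : f = g := by
  classical
  obtain ⟨⟨⟨hrefl, hbt⟩, hanti⟩, hfin, hsimp, -, -⟩ := h
  obtain ⟨fs, hfs, hf⟩ := h1
  obtain ⟨gs, hgs, hg⟩ := h2
  set p : Multiset (Multiset X × X) :=
    (gs, f) ::ₘ (fs.erase f).map (fun x => ({x}, x)) with hpdef
  have hsnd : p.map Prod.snd = fs := by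
    simp only [hpdef, Multiset.map_cons, Multiset.map_map]
    simp [Multiset.cons_erase hf]
  have hblocks : ∀ q ∈ p, r q.1 q.2 := by
    intro q hq
    rcases Multiset.mem_cons.mp hq with hh | hh
    · rw [hh]; exact hgs
    · obtain ⟨x, -, rfl⟩ := Multiset.mem_map.mp hh; exact hrefl x
  have hres := hbt p g (by rw [hsnd]; exact hfs) hblocks
  have hfst : (p.map Prod.fst).sum = gs + fs.erase f := by
    simp only [hpdef, Multiset.map_cons, Multiset.map_map]
    simp [Multiset.sum_cons, Function.comp, Multiset.sum_map_singleton]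
  rw [hfst] at hres
  have heq : gs + fs.erase f = {g} :=
    rel_self_mem hbt hrefl hsimp hres (Multiset.mem_add.mpr (Or.inl hg))
  have hcard : Multiset.card gs + Multiset.card (fs.erase f) = 1 := by
    have := congrArg Multiset.card heq
    simpa using this
  have hgpos : 0 < Multiset.card gs := Multiset.card_pos_iff_exists_mem.mpr ⟨g, hg⟩
  have hgs1 : Multiset.card gs = 1 := by omega
  have hfe0 : Multiset.card (fs.erase f) = 0 := by omega
  obtain ⟨a, ha⟩ := Multiset.card_eq_one.mp hgs1
  have hag : a = g := by rw [ha, Multiset.mem_singleton] at hg; exact hg.symm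
  have hgseq : gs = {g} := by rw [ha, hag]
  have hfseq : fs = {f} := by
    have hc := Multiset.cons_erase hf
    rw [Multiset.card_eq_zero.mp hfe0] at hc
    exact hc.symm
  exact hanti f g (hfseq ▸ hfs) (hgseq ▸ hgs)

/-- The strict descendant relation. -/
def SDesc (r : Rel X) (f e : X) : Prop := descends r f e ∧ f ≠ e

lemma sdesc_wf (h : IsTree r) : WellFounded (SDesc r) := by
  have hfin : Finite X := h.2.1
  have hrefl : ∀ e : X, r {e} e := h.1.1.1
  have hbt : BTrans r := h.1.1.2
  letI : IsTrans X (SDesc r) := ⟨by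
    rintro a b c ⟨d1, n1⟩ ⟨d2, n2⟩
    refine ⟨descends_trans hbt hrefl d1 d2, ?_⟩
    rintro rfl
    exact n2 (descends_antisymm h d2 d1)⟩
  letI : IsIrrefl X (SDesc r) := ⟨fun a ha => ha.2 rfl⟩
  exact Finite.wellFounded_of_trans_of_irrefl _

lemma sdesc_of_mem (h : IsTree r) {fs : Multiset X} {a f : X}
    (hfs : r fs a) (hne : fs ≠ ({a} : Multiset X)) (hf : f ∈ fs) : SDesc r f a := by
  refine ⟨⟨fs, hfs, hf⟩, ?_⟩
  rintro rfl
  exact hne (rel_self_mem h.1.1.2 h.1.1.1 h.2.2.1 hfs hf)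

lemma leaf_block {e : X} {b : Multiset X} (hl : IsLeaf r e) (hb : r b e) :
    b = ({e} : Multiset X) := by
  by_contra hne
  exact hl ⟨b, hb, hne⟩

lemma tupleLE_leaf_eq {as bs : Multiset X} (h : tupleLE r as bs)
    (hbs : ∀ x ∈ bs, IsLeaf r x) : as = bs := by
  obtain ⟨p, hs, hf, hr⟩ := h
  have hsingle : ∀ q ∈ p, Prod.fst q = ({q.2} : Multiset X) := fun q hq =>
    leaf_block (hbs q.2 (hs ▸ Multiset.mem_map_of_mem Prod.snd hq)) (hr q hq)
  calc as = (p.map Prod.fst).sum := hf.symm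
    _ = (p.map fun q => ({q.2} : Multiset X)).sum := by
        rw [Multiset.map_congr rfl hsingle]
    _ = ((p.map Prod.snd).map fun x => ({x} : Multiset X)).sum := by
        rw [Multiset.map_map]; rfl
    _ = p.map Prod.snd := Multiset.sum_map_singleton _
    _ = bs := hs

/-- The minimum tuple below `a`, consisting of leaves. -/
def MinTuple (r : Rel X) (l : Multiset X) (a : X) : Prop :=
  r l a ∧ (∀ gs, r gs a → tupleLE r l gs) ∧ ∀ x ∈ l, IsLeaf r x

lemma minTuple_exists (h : IsTree r) : ∀ a : X, ∃ l, MinTuple r l a := by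
  classical
  have hrefl : ∀ e : X, r {e} e := h.1.1.1
  have hbt : BTrans r := h.1.1.2
  set m : X → Multiset X := fun f => if hf : ∃ l, MinTuple r l f then hf.choose else 0 with hm
  have hmspec : ∀ f : X, (∃ l, MinTuple r l f) → MinTuple r (m f) f := by
    intro f hf
    simp only [hm, dif_pos hf]
    exact hf.choose_spec
  intro a
  induction a using WellFounded.induction (sdesc_wf h) with
  | _ a IH =>
  rcases h.2.2.2.1 a with hl | ⟨fs, hup⟩
  · refine ⟨{a}, hrefl a, ?_, ?_⟩
    · intro gs hgs
      rw [leaf_block hl hgs]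
      exact tupleLE_single (hrefl a)
    · intro x hx
      rw [Multiset.mem_singleton] at hx
      exact hx ▸ hl
  · obtain ⟨⟨hfa, hne⟩, hmax⟩ := hup
    have hmem : ∀ f ∈ fs, MinTuple r (m f) f := fun f hf =>
      hmspec f (IH f (sdesc_of_mem h hfa hne hf))
    have hrel : r ((fs.map m).sum) a := by
      have := hbt (fs.map fun f => (m f, f)) a ?_ ?_
      · simpa [Multiset.map_map, Function.comp] using this
      · simpa [Multiset.map_map, Function.comp] using hfa
      · intro q hq
        obtain ⟨f, hf, rfl⟩ := Multiset.mem_map.mp hq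
        exact (hmem f hf).1
    refine ⟨(fs.map m).sum, hrel, ?_, ?_⟩
    · intro gs hgs
      by_cases hgsa : gs = ({a} : Multiset X)
      · rw [hgsa]; exact tupleLE_single hrel
      · obtain ⟨p2, hs2, hf2, hr2⟩ := hmax gs hgs hgsa
        have hble : tupleLE r ((p2.map fun q => m q.2).sum) ((p2.map Prod.fst).sum) := by
          have := tupleLE_bigadd (r := r) (p2.map fun q => (m q.2, q.1)) ?_
          · simpa [Multiset.map_map, Function.comp] using this
          · intro q' hq'
            obtain ⟨q, hq, rfl⟩ := Multiset.mem_map.mp hq'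
            have hq2 : q.2 ∈ fs := hs2 ▸ Multiset.mem_map_of_mem Prod.snd hq
            exact (hmem q.2 hq2).2.1 q.1 (hr2 q hq)
        have heq : (p2.map fun q => m q.2).sum = (fs.map m).sum := by
          rw [← hs2, Multiset.map_map]; rfl
        rw [heq, hf2] at hble
        exact hble
    · intro x hx
      obtain ⟨s, hsm, hxs⟩ := mem_msum.mp hx
      obtain ⟨f, hf, rfl⟩ := Multiset.mem_map.mp hsm
      exact (hmem f hf).2.2 x hxs

lemma minTuple_eq {l : Multiset X} {a : X}
    (hmin : r l a ∧ ∀ gs, r gs a → tupleLE r l gs)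
    {l' : Multiset X} (h' : MinTuple r l' a) : l = l' :=
  tupleLE_leaf_eq (hmin.2 l' h'.1) h'.2.2

lemma minTuple_sum (h : IsTree r) (lam : X → Multiset X)
    (hlam : ∀ a : X, MinTuple r (lam a) a) {as : Multiset X} {a : X} (has : r as a) :
    (as.map lam).sum = lam a := by
  have hbt : BTrans r := h.1.1.2
  have h1 : r ((as.map lam).sum) a := by
    have := hbt (as.map fun x => (lam x, x)) a ?_ ?_
    · simpa [Multiset.map_map, Function.comp] using this
    · simpa [Multiset.map_map, Function.comp] using has
    · intro q hq
      obtain ⟨x, hx, rfl⟩ := Multiset.mem_map.mp hq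
      exact (hlam x).1
  have h2 : tupleLE r (lam a) ((as.map lam).sum) := (hlam a).2.1 _ h1
  refine (tupleLE_leaf_eq h2 ?_).symm
  intro x hx
  obtain ⟨s, hsm, hxs⟩ := mem_msum.mp hx
  obtain ⟨f, hf, rfl⟩ := Multiset.mem_map.mp hsm
  exact (hlam f).2.2 x hxs

end Tree

section Tensor

variable {A B : Type u} {rS : Rel A} {rT : Rel B}

lemma mprod_zero_left (bs : Multiset B) : mprod (0 : Multiset A) bs = 0 := rfl

lemma mprod_add_left (u v : Multiset A) (w : Multiset B) :
    mprod (u + v) w = mprod u w + mprod v w := Multiset.add_bind u v _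

lemma mprod_sum_left {ι : Type u} (g : ι → Multiset A) (w : Multiset B) (as : Multiset ι) :
    (as.map fun a => mprod (g a) w).sum = mprod (as.map g).sum w := by
  induction as using Multiset.induction with
  | empty => simp [mprod]
  | cons a as ih => simp [Multiset.sum_cons, ih, mprod_add_left]

lemma mprod_zero_right (u : Multiset A) : mprod u (0 : Multiset B) = 0 := by
  simp [mprod]

lemma mprod_add_right (u : Multiset A) (w1 w2 : Multiset B) :
    mprod u (w1 + w2) = mprod u w1 + mprod u w2 := by
  simp [mprod, Multiset.map_add, Multiset.bind_add]

lemma mprod_sum_right {ι : Type u} (u : Multiset A) (g : ι → Multiset B) (bs : Multiset ι) :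
    (bs.map fun b => mprod u (g b)).sum = mprod u (bs.map g).sum := by
  induction bs using Multiset.induction with
  | empty => simp [mprod_zero_right]
  | cons b bs ih => simp [Multiset.sum_cons, ih, mprod_add_right]

/-- Goal 1 generalized: `as ≤ a`, `bs ≤ b` gives `as × bs ≤ (a,b)` in the tensor. -/
lemma tensor_mprod {as : Multiset A} {a : A} {bs : Multiset B} {b : B}
    (ha : rS as a) (hb : rT bs b) : tensorRel rS rT (mprod as bs) (a, b) := by
  set p : Multiset (Multiset (A × B) × (A × B)) :=
    as.map fun x => ((bs.map fun y => (x, y)), (x, b)) with hpdef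
  have hfst : (p.map Prod.fst).sum = mprod as bs := by
    simp only [hpdef, Multiset.map_map, Function.comp]
    rfl
  rw [← hfst]
  apply GenRel.btrans
  · have hsnd : p.map Prod.snd = as.map fun x => (x, b) := by
      simp [hpdef, Multiset.map_map, Function.comp]
    rw [hsnd]
    exact GenRel.of _ _ (Or.inl ⟨as, ha, rfl⟩)
  · intro q hq
    obtain ⟨x, hx, rfl⟩ := Multiset.mem_map.mp hq
    exact GenRel.of _ _ (Or.inr ⟨bs, hb, rfl⟩)

/-- Key invariant: mapping each letter to its minimal product tuple sums to the
minimal product tuple of the target. -/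
lemma tensor_sum_min (hS : IsTree rS) (hT : IsTree rT)
    (lamS : A → Multiset A) (hlS : ∀ a, MinTuple rS (lamS a) a)
    (lamT : B → Multiset B) (hlT : ∀ b, MinTuple rT (lamT b) b)
    {gs : Multiset (A × B)} {e : A × B} (hg : tensorRel rS rT gs e) :
    (gs.map fun g => mprod (lamS g.1) (lamT g.2)).sum = mprod (lamS e.1) (lamT e.2) := by
  induction hg with
  | of fs e hgen =>
    rcases hgen with ⟨as, has, rfl⟩ | ⟨bs, hbs, rfl⟩
    · rw [Multiset.map_map]
      have : ((fun g : A × B => mprod (lamS g.1) (lamT g.2)) ∘ fun a => (a, e.2)) =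
          fun a => mprod (lamS a) (lamT e.2) := rfl
      rw [this, mprod_sum_left, minTuple_sum hS lamS hlS has]
    · rw [Multiset.map_map]
      have : ((fun g : A × B => mprod (lamS g.1) (lamT g.2)) ∘ fun b => (e.1, b)) =
          fun b => mprod (lamS e.1) (lamT b) := rfl
      rw [this, mprod_sum_right, minTuple_sum hT lamT hlT hbs]
  | refl e => simp
  | btrans p e h1 h2 ih1 ih2 =>
    rw [map_msum, Multiset.map_map, msum_msum, Multiset.map_map]
    have hcong : ∀ q ∈ p,
        (Multiset.sum ∘ Multiset.map (fun g : A × B => mprod (lamS g.1) (lamT g.2)) ∘ Prod.fst) q =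
        ((fun g : A × B => mprod (lamS g.1) (lamT g.2)) ∘ Prod.snd) q := by
      intro q hq
      exact ih2 q hq
    rw [Multiset.map_congr rfl hcong, ← Multiset.map_map]
    exact ih1

end Tensor

/-- For `e = (s,t) ∈ S ⊗ T`, the tuple `s^λ × t^λ` (the
product of the minimal tuples below `s` and `t`) is the minimum tuple below
`e` in `S ⊗ T`. -/
theorem stmt15 {A B : Type u} (rS : Rel A) (rT : Rel B)
    (hS : IsTree rS) (hT : IsTree rT) (s : A) (t : B)
    (slam : Multiset A) (tlam : Multiset B)
    (hsl : rS slam s ∧ ∀ gs, rS gs s → tupleLE rS slam gs)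
    (htl : rT tlam t ∧ ∀ gs, rT gs t → tupleLE rT tlam gs) :
    tensorRel rS rT (mprod slam tlam) (s, t) ∧
    ∀ gs, tensorRel rS rT gs (s, t) →
      tupleLE (tensorRel rS rT) (mprod slam tlam) gs := by
  classical
  choose lamS hlS using minTuple_exists hS
  choose lamT hlT using minTuple_exists hT
  have hseq : slam = lamS s := minTuple_eq hsl (hlS s)
  have hteq : tlam = lamT t := minTuple_eq htl (hlT t)
  constructor
  · exact tensor_mprod hsl.1 htl.1
  · intro gs hgs
    have hK := tensor_sum_min hS hT lamS hlS lamT hlT hgs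
    refine ⟨gs.map fun g => (mprod (lamS g.1) (lamT g.2), g), ?_, ?_, ?_⟩
    · simp [Multiset.map_map, Function.comp]
    · rw [Multiset.map_map]
      have hcomp : (Prod.fst ∘ fun g : A × B => (mprod (lamS g.1) (lamT g.2), g)) =
          fun g : A × B => mprod (lamS g.1) (lamT g.2) := rfl
      rw [hcomp, hseq, hteq]
      exact hK
    · intro q hq
      obtain ⟨g, hg, rfl⟩ := Multiset.mem_map.mp hq
      exact tensor_mprod (hlS g.1).1 (hlT g.2).1

end BroadPaper
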